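/- Consider a two-state continuous-time MDP with S = {1,2}, U = [0,1], rate rows q^u_1 = (-u, u), q^u_2 = (u, -u), discount δ(t) = (e^{-t}+e^{-2t})/2, and rewards g₁(u) = -(7/8)√u, g₂(u) = 19/9 - √(1-u). Then no standard (deterministic feedback) equilibrium exists: for each of the four candidate pairs (a*,b*) ∈ {0,1}², the corresponding best-response condition fails. In particular, V^{(0,0)}(0,1) - V^{(0,0)}(0,2) = -5/6. -/

import Mathlib

open MeasureTheory Real

noncomputable section

/-- Generator of the two-state chain: rate rows `q^a_1 = (-a, a)`, `q^b_2 = (b, -b)`. -/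
def Qgen (a b : ℝ) : Matrix (Fin 2) (Fin 2) ℝ := !![-a, a; b, -b]

/-- The discount function `δ(t) = (e^{-t} + e^{-2t})/2`. -/
def dis19 (t : ℝ) : ℝ := (Real.exp (-t) + Real.exp (-(2 * t))) / 2

/-- Reward in state 1: `g₁(u) = -(7/8)√u`. -/
def g1 (u : ℝ) : ℝ := -(7 / 8) * Real.sqrt u

/-- Reward in state 2: `g₂(u) = 19/9 - √(1-u)`. -/
def g2 (u : ℝ) : ℝ := 19 / 9 - Real.sqrt (1 - u)

/-- `V^{(a,b)}(0,i) = E_i[∫_0^∞ δ(s) g_{X_s}(α(X_s)) ds]` for the stationary standard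
control `α = (a, b)`, computed via the transition semigroup `e^{sQ}`. -/
def Vab (a b : ℝ) (i : Fin 2) : ℝ :=
  ∫ s in Set.Ioi (0 : ℝ),
    dis19 s * ((NormedSpace.exp (s • Qgen a b)).mulVec ![g1 a, g2 b]) i

/-- `(a, b) ∈ [0,1]²` is a standard equilibrium iff `a` maximizes
`a' ↦ g₁(a') - a'(V(0,1) - V(0,2))` and `b` maximizes `b' ↦ g₂(b') + b'(V(0,1) - V(0,2))`,
where `V = V^{(a,b)}`. -/
def IsStdEquilibrium (a b : ℝ) : Prop :=
  a ∈ Set.Icc (0 : ℝ) 1 ∧ b ∈ Set.Icc (0 : ℝ) 1 ∧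
  (∀ a' ∈ Set.Icc (0 : ℝ) 1,
    g1 a' - a' * (Vab a b 0 - Vab a b 1) ≤ g1 a - a * (Vab a b 0 - Vab a b 1)) ∧
  (∀ b' ∈ Set.Icc (0 : ℝ) 1,
    g2 b' + b' * (Vab a b 0 - Vab a b 1) ≤ g2 b + b * (Vab a b 0 - Vab a b 1))

/-! ### Auxiliary integral lemmas -/

open Set

lemma aux_pw (s : ℝ) (k : ℕ) : Real.exp (-s) ^ k = Real.exp (-(k * s)) := by
  rw [← Real.exp_nat_mul]; congr 1; push_cast; ring

lemma aux_intOn (k : ℝ) (hk : 0 < k) :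
    IntegrableOn (fun s : ℝ => Real.exp (-(k*s))) (Ioi 0) := by
  simpa [neg_mul] using exp_neg_integrableOn_Ioi 0 hk

lemma aux_intval (k : ℝ) (hk : 0 < k) : ∫ s in Ioi (0:ℝ), Real.exp (-(k*s)) = 1/k := by
  have := integral_comp_mul_left_Ioi (fun x => Real.exp (-x)) 0 hk
  simp only [mul_zero, integral_exp_neg_Ioi, neg_zero, Real.exp_zero, smul_eq_mul,
    mul_one] at this
  rw [this]; ring

lemma aux_int_combo (c1 c2 c3 c4 : ℝ) :
    ∫ s in Ioi (0:ℝ), (c1 * Real.exp (-s) + c2 * Real.exp (-s)^2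
      + c3 * Real.exp (-s)^3 + c4 * Real.exp (-s)^4)
      = c1 + c2/2 + c3/3 + c4/4 := by
  have key : ∀ s : ℝ, c1 * Real.exp (-s) + c2 * Real.exp (-s)^2
      + c3 * Real.exp (-s)^3 + c4 * Real.exp (-s)^4
      = c1 * Real.exp (-(1*s)) + c2 * Real.exp (-(2*s))
      + c3 * Real.exp (-(3*s)) + c4 * Real.exp (-(4*s)) := by
    intro s
    rw [aux_pw s 2, aux_pw s 3, aux_pw s 4]
    push_cast
    norm_num
  simp_rw [key]
  have h1 := (aux_intOn 1 one_pos).const_mul c1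
  have h2 := (aux_intOn 2 two_pos).const_mul c2
  have h3 := (aux_intOn 3 (by norm_num)).const_mul c3
  have h4 := (aux_intOn 4 (by norm_num)).const_mul c4
  have hA : IntegrableOn (fun s : ℝ =>
      c1 * Real.exp (-(1*s)) + c2 * Real.exp (-(2*s))) (Ioi 0) := h1.add h2
  have hB : IntegrableOn (fun s : ℝ =>
      c1 * Real.exp (-(1*s)) + c2 * Real.exp (-(2*s)) + c3 * Real.exp (-(3*s))) (Ioi 0) :=
    hA.add h3
  rw [integral_add hB h4, integral_add hA h3, integral_add h1 h2,
      integral_const_mul, integral_const_mul, integral_const_mul, integral_const_mul,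
      aux_intval 1 one_pos, aux_intval 2 two_pos, aux_intval 3 (by norm_num),
      aux_intval 4 (by norm_num)]
  ring

lemma aux_dis19_eq (s : ℝ) : dis19 s = (Real.exp (-s) + Real.exp (-s)^2) / 2 := by
  have h : (-(2*s) : ℝ) = -s + -s := by ring
  rw [dis19, h, Real.exp_add]; ring

/-! ### Matrix exponentials -/

lemma aux_exp_conj_fin2 (s : ℝ) (Q U V : Matrix (Fin 2) (Fin 2) ℝ) (d : Fin 2 → ℝ)
    (hUV : U * V = 1) (hQ : s • Q = U * Matrix.diagonal d * V) :
    NormedSpace.exp (s • Q) = U * Matrix.diagonal (fun i => Real.exp (d i)) * V := by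
  have hU : IsUnit U := (Matrix.isUnit_iff_isUnit_det U).2
    (IsUnit.of_mul_eq_one _ (by rw [← Matrix.det_mul, hUV, Matrix.det_one]))
  have hVi : U⁻¹ = V := Matrix.inv_eq_right_inv hUV
  rw [hQ, ← hVi, Matrix.exp_conj U _ hU, Matrix.exp_diagonal, hVi]
  congr 1
  congr 1
  funext i
  rw [Pi.exp_def, ← Real.exp_eq_exp_ℝ]

lemma aux_exp00 (s : ℝ) : NormedSpace.exp (s • Qgen 0 0) = 1 := by
  have h : s • Qgen 0 0 = 0 := by
    ext i j; fin_cases i <;> fin_cases j <;> simp [Qgen]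
  rw [h, NormedSpace.exp_zero]

lemma aux_exp11 (s : ℝ) : NormedSpace.exp (s • Qgen 1 1) =
    !![(1 + Real.exp (-s)^2)/2, (1 - Real.exp (-s)^2)/2;
       (1 - Real.exp (-s)^2)/2, (1 + Real.exp (-s)^2)/2] := by
  have h := aux_exp_conj_fin2 s (Qgen 1 1) !![(1:ℝ),1;1,-1] !![(1:ℝ)/2,1/2;1/2,-1/2]
    ![0, -(2*s)]
    (by ext i j; fin_cases i <;> fin_cases j <;>
        norm_num [Matrix.mul_apply, Fin.sum_univ_two])
    (by ext i j; fin_cases i <;> fin_cases j <;>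
        simp [Qgen, Matrix.mul_apply, Fin.sum_univ_two, Matrix.diagonal, Matrix.vecHead,
          Matrix.vecTail] <;> ring)
  rw [h]
  have e2 : Real.exp (-(2*s)) = Real.exp (-s)^2 := by
    rw [show (-(2*s) : ℝ) = -s + -s by ring, Real.exp_add]; ring
  ext i j; fin_cases i <;> fin_cases j <;>
    simp [Matrix.mul_apply, Fin.sum_univ_two, Matrix.diagonal, Matrix.vecHead,
      Matrix.vecTail, Real.exp_zero, show (-(s*2) : ℝ) = -(2*s) by ring, e2] <;> ring

lemma aux_exp01 (s : ℝ) : NormedSpace.exp (s • Qgen 0 1) =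
    !![1, 0; 1 - Real.exp (-s), Real.exp (-s)] := by
  have h := aux_exp_conj_fin2 s (Qgen 0 1) !![(1:ℝ),0;1,-1] !![(1:ℝ),0;1,-1] ![0, -s]
    (by ext i j; fin_cases i <;> fin_cases j <;>
        norm_num [Matrix.mul_apply, Fin.sum_univ_two])
    (by ext i j; fin_cases i <;> fin_cases j <;>
        simp [Qgen, Matrix.mul_apply, Fin.sum_univ_two, Matrix.diagonal, Matrix.vecHead,
          Matrix.vecTail] <;> ring)
  rw [h]
  ext i j; fin_cases i <;> fin_cases j <;>
    simp [Matrix.mul_apply, Fin.sum_univ_two, Matrix.diagonal, Matrix.vecHead,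
      Matrix.vecTail, Real.exp_zero] <;> ring

lemma aux_exp10 (s : ℝ) : NormedSpace.exp (s • Qgen 1 0) =
    !![Real.exp (-s), 1 - Real.exp (-s); 0, 1] := by
  have h := aux_exp_conj_fin2 s (Qgen 1 0) !![(1:ℝ),1;0,1] !![(1:ℝ),-1;0,1] ![-s, 0]
    (by ext i j; fin_cases i <;> fin_cases j <;>
        norm_num [Matrix.mul_apply, Fin.sum_univ_two])
    (by ext i j; fin_cases i <;> fin_cases j <;>
        simp [Qgen, Matrix.mul_apply, Fin.sum_univ_two, Matrix.diagonal, Matrix.vecHead,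
          Matrix.vecTail] <;> ring)
  rw [h]
  ext i j; fin_cases i <;> fin_cases j <;>
    simp [Matrix.mul_apply, Fin.sum_univ_two, Matrix.diagonal, Matrix.vecHead,
      Matrix.vecTail, Real.exp_zero] <;> ring

/-! ### Values of `Vab` at the four corner strategy pairs -/

lemma aux_Vab_eq (a b : ℝ) (i : Fin 2) (c1 c2 c3 c4 : ℝ)
    (h : ∀ s : ℝ, dis19 s * ((NormedSpace.exp (s • Qgen a b)).mulVec ![g1 a, g2 b]) i
      = c1 * Real.exp (-s) + c2 * Real.exp (-s)^2
      + c3 * Real.exp (-s)^3 + c4 * Real.exp (-s)^4) :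
    Vab a b i = c1 + c2/2 + c3/3 + c4/4 := by
  unfold Vab
  simp_rw [h]
  exact aux_int_combo c1 c2 c3 c4

lemma aux_Vab00_0 : Vab 0 0 0 = 0 := by
  have h := aux_Vab_eq 0 0 0 0 0 0 0 (fun s => by
    rw [aux_exp00 s, aux_dis19_eq s]
    simp [g1, g2, Matrix.mulVec, dotProduct, Fin.sum_univ_two])
  rw [h]; norm_num

lemma aux_Vab00_1 : Vab 0 0 1 = 5/6 := by
  have h := aux_Vab_eq 0 0 1 (5/9) (5/9) 0 0 (fun s => by
    rw [aux_exp00 s, aux_dis19_eq s]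
    simp [g1, g2, Matrix.mulVec, dotProduct, Fin.sum_univ_two]
    ring)
  rw [h]; norm_num

lemma aux_Vab01_0 : Vab 0 1 0 = 0 := by
  have h := aux_Vab_eq 0 1 0 0 0 0 0 (fun s => by
    rw [aux_exp01 s, aux_dis19_eq s]
    simp [g1, g2, Matrix.mulVec, dotProduct, Fin.sum_univ_two])
  rw [h]; norm_num

lemma aux_Vab01_1 : Vab 0 1 1 = 95/108 := by
  have h := aux_Vab_eq 0 1 1 0 (19/18) (19/18) 0 (fun s => by
    rw [aux_exp01 s, aux_dis19_eq s]
    simp [g1, g2, Matrix.mulVec, dotProduct, Fin.sum_univ_two]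
    ring)
  rw [h]; norm_num

lemma aux_Vab10_0 : Vab 1 0 0 = 5/864 := by
  have h := aux_Vab_eq 1 0 0 (5/9) (-(7/16)) (-(143/144)) 0 (fun s => by
    rw [aux_exp10 s, aux_dis19_eq s]
    simp [g1, g2, Matrix.mulVec, dotProduct, Fin.sum_univ_two]
    ring)
  rw [h]; norm_num

lemma aux_Vab10_1 : Vab 1 0 1 = 5/6 := by
  have h := aux_Vab_eq 1 0 1 (5/9) (5/9) 0 0 (fun s => by
    rw [aux_exp10 s, aux_dis19_eq s]
    simp [g1, g2, Matrix.mulVec, dotProduct, Fin.sum_univ_two]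
    ring)
  rw [h]; norm_num

lemma aux_Vab11_0 : Vab 1 1 0 = 97/3456 := by
  have h := aux_Vab_eq 1 1 0 (89/288) (89/288) (-(215/288)) (-(215/288)) (fun s => by
    rw [aux_exp11 s, aux_dis19_eq s]
    simp [g1, g2, Matrix.mulVec, dotProduct, Fin.sum_univ_two]
    ring)
  rw [h]; norm_num

lemma aux_Vab11_1 : Vab 1 1 1 = 3107/3456 := by
  have h := aux_Vab_eq 1 1 1 (89/288) (89/288) (215/288) (215/288) (fun s => by
    rw [aux_exp11 s, aux_dis19_eq s]
    simp [g1, g2, Matrix.mulVec, dotProduct, Fin.sum_univ_two]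
    ring)
  rw [h]; norm_num

/-! ### Strict concavity of the square root, in the form we need -/

lemma aux_sqrt_gt {x : ℝ} (h0 : 0 < x) (h1 : x < 1) : x < Real.sqrt x := by
  nlinarith [Real.sq_sqrt h0.le, Real.sqrt_pos.2 h0, (Real.sqrt_lt' one_pos).2 (by nlinarith)]

/-- in the two-state continuous-time example with `U = [0,1]`,
`δ(t) = (e^{-t}+e^{-2t})/2`, `g₁(u) = -(7/8)√u`, `g₂(u) = 19/9 - √(1-u)`, no standard
(deterministic feedback) equilibrium exists; in particular
`V^{(0,0)}(0,1) - V^{(0,0)}(0,2) = -5/6`. -/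
theorem no_standard_equilibrium_example :
    (¬ ∃ a b : ℝ, IsStdEquilibrium a b) ∧ Vab 0 0 0 - Vab 0 0 1 = -(5 / 6) := by
  constructor
  · rintro ⟨a, b, ⟨ha0, ha1⟩, ⟨hb0, hb1⟩, hA, hB⟩
    set D := Vab a b 0 - Vab a b 1 with hD
    -- Step 1: a ∈ {0, 1}
    have hAcorner : a = 0 ∨ a = 1 := by
      by_contra hc
      push_neg at hc
      obtain ⟨hne0, hne1⟩ := hc
      have h0a : 0 < a := lt_of_le_of_ne ha0 (Ne.symm hne0)
      have ha1' : a < 1 := lt_of_le_of_ne ha1 hne1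
      have hs := aux_sqrt_gt h0a ha1'
      have h0 := hA 0 ⟨le_refl 0, zero_le_one⟩
      have h1 := hA 1 ⟨zero_le_one, le_refl 1⟩
      rw [g1] at h0 h1
      simp only [Real.sqrt_zero, Real.sqrt_one] at h0 h1
      rw [g1] at h0 h1
      nlinarith [Real.sqrt_nonneg a]
    -- Step 2: b ∈ {0, 1}
    have hBcorner : b = 0 ∨ b = 1 := by
      by_contra hc
      push_neg at hc
      obtain ⟨hne0, hne1⟩ := hc
      have h0b : 0 < b := lt_of_le_of_ne hb0 (Ne.symm hne0)
      have hb1' : b < 1 := lt_of_le_of_ne hb1 hne1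
      have hs := aux_sqrt_gt (by linarith : (0:ℝ) < 1 - b) (by linarith : (1:ℝ) - b < 1)
      have h0 := hB 0 ⟨le_refl 0, zero_le_one⟩
      have h1 := hB 1 ⟨zero_le_one, le_refl 1⟩
      rw [g2] at h0 h1
      simp only [sub_zero, sub_self, Real.sqrt_zero, Real.sqrt_one] at h0 h1
      rw [g2] at h0 h1
      nlinarith [Real.sqrt_nonneg (1 - b)]
    -- Step 3: each of the four corners fails
    rcases hAcorner with rfl | rfl <;> rcases hBcorner with rfl | rfl
    · -- (0,0): b-condition fails at b' = 1
      have h := hB 1 ⟨zero_le_one, le_refl 1⟩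
      rw [g2, g2] at h
      simp only [sub_self, sub_zero, Real.sqrt_zero, Real.sqrt_one] at h
      rw [hD, aux_Vab00_0, aux_Vab00_1] at h
      norm_num at h
    · -- (0,1): a-condition fails at a' = 1
      have h := hA 1 ⟨zero_le_one, le_refl 1⟩
      rw [g1, g1] at h
      simp only [Real.sqrt_zero, Real.sqrt_one] at h
      rw [hD, aux_Vab01_0, aux_Vab01_1] at h
      norm_num at h
    · -- (1,0): b-condition fails at b' = 1
      have h := hB 1 ⟨zero_le_one, le_refl 1⟩
      rw [g2, g2] at h
      simp only [sub_self, sub_zero, Real.sqrt_zero, Real.sqrt_one] at h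
      rw [hD, aux_Vab10_0, aux_Vab10_1] at h
      norm_num at h
    · -- (1,1): a-condition fails at a' = 0
      have h := hA 0 ⟨le_refl 0, zero_le_one⟩
      rw [g1, g1] at h
      simp only [Real.sqrt_zero, Real.sqrt_one] at h
      rw [hD, aux_Vab11_0, aux_Vab11_1] at h
      norm_num at h
  · rw [aux_Vab00_0, aux_Vab00_1]
    norm_num

end
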